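/- Let R = ℤ[q] be the polynomial ring in one variable q, and let L = R[x,x⁻¹] be the Laurent polynomial ring over R. For m ∈ ℕ set χ_m = Σ_{k=0}^{m} x^{m−2k} ∈ L, and let H : L → L be the R-linear map defined on the basis {x^m : m ∈ ℤ} by H(x^m) = χ_m for m ≥ 0, H(x^{−1}) = 0, and H(x^m) = −χ_{−m−2} for m ≤ −2. Then for every n ∈ ℕ and every g ∈ L satisfying (x² − 1)·g = (x^n − x^{2−n}) + q·(x^{2−n} − x^{n+2}), one has H(x^{−1}·g) = q·H(x^{−n−1}). -/

import Mathlib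

open LaurentPolynomial Polynomial

/-- The character of the irreducible `SL₂`-representation of highest weight `m`, as a Laurent
polynomial in `x` with coefficients in `ℤ[q]`. -/
noncomputable def sl2CharQ (m : ℕ) : LaurentPolynomial (Polynomial ℤ) :=
  ∑ k ∈ Finset.range (m + 1), T ((m : ℤ) - 2 * k)

private lemma DL_T_sub_ne_zero : (T 2 - 1 : LaurentPolynomial (Polynomial ℤ)) ≠ 0 := by
  rw [← T_zero]
  intro h
  have h' := sub_eq_zero.mp h
  unfold LaurentPolynomial.T at h'
  have := AddMonoidAlgebra.single_left_injective (one_ne_zero (α := Polynomial ℤ)) h'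
  norm_num at this

private lemma DL_C_mul_eq_smul (p : Polynomial ℤ) (f : LaurentPolynomial (Polynomial ℤ)) :
    LaurentPolynomial.C p * f = p • f := by
  rw [Algebra.smul_def]; rfl

private lemma DL_telescope (M : ℕ) (a : ℤ) :
    (T 2 - 1 : LaurentPolynomial (Polynomial ℤ)) * ∑ k ∈ Finset.range M, T (a + 2 * k) =
      T (a + 2 * M) - T a := by
  induction M with
  | zero => simp
  | succ M ih =>
    rw [Finset.sum_range_succ, mul_add, ih, sub_mul, one_mul, ← T_add]
    have h1 : (2 + (a + 2 * (M : ℤ))) = a + 2 * ((M : ℕ) + 1 : ℕ) := by push_cast; ring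
    rw [h1]
    push_cast
    ring

/-- Rank-one case of Lemma 2.4(b): for the Euler-characteristic map `H` (Borel–Weil–Bott for
`ℙ¹`) and `g` the value of the Demazure–Lusztig operator `Φ(T_s)⋆O(-n)`, one has
`H(x⁻¹·g) = q·H(x^{-n-1})`. -/
theorem demazure_lusztig_euler_characteristic_sl2
    (H : LaurentPolynomial (Polynomial ℤ) →ₗ[Polynomial ℤ] LaurentPolynomial (Polynomial ℤ))
    (hpos : ∀ m : ℕ, H (T (m : ℤ)) = sl2CharQ m)
    (hneg1 : H (T (-1)) = 0)
    (hneg : ∀ m : ℕ, H (T (-(m : ℤ) - 2)) = - sl2CharQ m)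
    (n : ℕ) (g : LaurentPolynomial (Polynomial ℤ))
    (hg : (T 2 - 1) * g =
        (T (n : ℤ) - T (2 - (n : ℤ))) +
          LaurentPolynomial.C Polynomial.X * (T (2 - (n : ℤ)) - T ((n : ℤ) + 2))) :
    H (T (-1) * g) = LaurentPolynomial.C Polynomial.X * H (T (-(n : ℤ) - 1)) := by
  have key : ∀ k : ℕ, H (T (k : ℤ)) + H (T (-(k : ℤ) - 2)) = 0 := by
    intro k; rw [hpos, hneg]; ring
  have SumA : ∀ m : ℕ, ∑ k ∈ Finset.range m, H (T (-(m : ℤ) + 2 * k)) = 0 := by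
    intro m
    induction m using Nat.strong_induction_on with
    | _ m ih =>
      match m with
      | 0 => simp
      | 1 => simpa using hneg1
      | (m + 2) =>
        rw [Finset.sum_range_succ, Finset.sum_range_succ']
        have hmid : ∀ k ∈ Finset.range m,
            H (T (-((m + 2 : ℕ) : ℤ) + 2 * ((k + 1 : ℕ) : ℤ))) = H (T (-(m : ℤ) + 2 * k)) := by
          intro k _
          congr 2
          push_cast
          ring
        rw [Finset.sum_congr rfl hmid, ih m (by omega)]
        have e1 : H (T (-((m + 2 : ℕ) : ℤ) + 2 * ((0 : ℕ) : ℤ))) = H (T (-(m : ℤ) - 2)) := by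
          congr 2; push_cast; ring
        have e2 : H (T (-((m + 2 : ℕ) : ℤ) + 2 * (((m + 1 : ℕ)) : ℤ))) = H (T ((m : ℤ))) := by
          congr 2; push_cast; ring
        rw [e1, e2]
        linear_combination key m
  have SumB : ∀ m : ℕ, ∑ k ∈ Finset.range (m + 1), H (T (-(m : ℤ) + 2 * k)) = sl2CharQ m := by
    intro m
    induction m using Nat.strong_induction_on with
    | _ m ih =>
      match m with
      | 0 => simpa using hpos 0
      | 1 =>
        rw [Finset.sum_range_succ, Finset.sum_range_succ, Finset.sum_range_zero]
        have e1 : H (T (-((1 : ℕ) : ℤ) + 2 * ((0 : ℕ) : ℤ))) = H (T (-1)) := by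
          norm_num
        have e2 : H (T (-((1 : ℕ) : ℤ) + 2 * ((1 : ℕ) : ℤ))) = H (T ((1 : ℕ) : ℤ)) := by
          norm_num
        rw [e1, e2, hneg1, hpos 1]
        ring
      | (m + 2) =>
        rw [Finset.sum_range_succ, Finset.sum_range_succ']
        have hmid : ∀ k ∈ Finset.range (m + 1),
            H (T (-((m + 2 : ℕ) : ℤ) + 2 * ((k + 1 : ℕ) : ℤ))) = H (T (-(m : ℤ) + 2 * k)) := by
          intro k _
          congr 2
          push_cast
          ring
        rw [Finset.sum_congr rfl hmid, ih m (by omega)]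
        have e1 : H (T (-((m + 2 : ℕ) : ℤ) + 2 * ((0 : ℕ) : ℤ))) = H (T (-(m : ℤ) - 2)) := by
          congr 2; push_cast; ring
        have e2 : H (T (-((m + 2 : ℕ) : ℤ) + 2 * (((m + 2 : ℕ)) : ℤ))) = H (T (((m + 2 : ℕ) : ℤ))) := by
          congr 2; push_cast; ring
        rw [e1, e2, hneg m, hpos (m + 2)]
        ring
  rcases n with _ | m
  · -- n = 0
    have hg' : (T 2 - 1) * g = (T 2 - 1) * (-1) := by
      rw [hg]; push_cast; rw [T_zero]; ring
    have hgg : g = -1 := mul_left_cancel₀ DL_T_sub_ne_zero hg'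
    rw [show T (-1) * g = -T (-1) by rw [hgg]; ring, map_neg, hneg1, neg_zero]
    have e0 : (-(((0 : ℕ) : ℤ)) - 1) = (-1 : ℤ) := by norm_num
    rw [e0, hneg1, mul_zero]
  · -- n = m + 1
    set h0 : LaurentPolynomial (Polynomial ℤ) :=
      (∑ k ∈ Finset.range m, T (-(m : ℤ) + 2 * k)) -
        LaurentPolynomial.C Polynomial.X * ∑ k ∈ Finset.range (m + 1), T (-(m : ℤ) + 2 * k)
      with h0def
    have t1 : T (-1) * T (((m + 1 : ℕ)) : ℤ) = (T ((m : ℤ)) : LaurentPolynomial (Polynomial ℤ)) := by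
      rw [← T_add]; congr 1; push_cast; ring
    have t2 : T (-1) * T (2 - (((m + 1 : ℕ)) : ℤ)) =
        (T (-(m : ℤ)) : LaurentPolynomial (Polynomial ℤ)) := by
      rw [← T_add]; congr 1; push_cast; ring
    have t3 : T (-1) * T ((((m + 1 : ℕ)) : ℤ) + 2) =
        (T ((m : ℤ) + 2) : LaurentPolynomial (Polynomial ℤ)) := by
      rw [← T_add]; congr 1; push_cast; ring
    have s1 := DL_telescope m (-(m : ℤ))
    have s2 := DL_telescope (m + 1) (-(m : ℤ))
    rw [show (-(m : ℤ) + 2 * (m : ℕ)) = (m : ℤ) by push_cast; ring] at s1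
    rw [show (-(m : ℤ) + 2 * ((m + 1 : ℕ) : ℤ)) = (m : ℤ) + 2 by push_cast; ring] at s2
    have heq : T (-1) * g = h0 := by
      apply mul_left_cancel₀ DL_T_sub_ne_zero
      have lhs : (T 2 - 1) * (T (-1) * g) = T (-1) * ((T 2 - 1) * g) := by ring
      rw [lhs, hg, h0def]
      linear_combination t1 - t2 + LaurentPolynomial.C Polynomial.X * t2 -
        LaurentPolynomial.C Polynomial.X * t3 - s1 + LaurentPolynomial.C Polynomial.X * s2
    rw [heq, h0def, map_sub, DL_C_mul_eq_smul, map_smul, map_sum, map_sum, SumA m, SumB m]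
    have e0 : (-(((m + 1 : ℕ)) : ℤ) - 1) = -(m : ℤ) - 2 := by push_cast; ring
    rw [e0, hneg m, DL_C_mul_eq_smul]
    simp [smul_neg]
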